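/- arXiv:1104.4605 — 3 statements merged into one kernel-verified Lean document; each statement's English description precedes it below -/
import Mathlib

section
/- Let 2 ≤ j, k = j+1 ≤ n, and A = R^{j,j+1}. Let x₀ be supported on a set T of (j+1)-element subsets of {1,…,n} with |T| = s < j+1, such that any two distinct members of T intersect in at most j−2 elements. Then ‖A_{T^c}^* A_T (A_T^*A_T)^{−1}‖_∞ ≤ 1/(j+1); consequently, if b = A x₀ + z with ‖z‖_∞ ≤ ε and δ ≥ ε, every solution x̂ of the problem minimize ‖x‖₁ subject to ‖Ax − b‖_∞ ≤ δ satisfies ‖x̂ − x₀‖₁ ≤ (2s(ε + δ)/(1 − s/(j+1))) · √(j+1). -/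
open scoped Classical
open Finset Matrix

noncomputable section

/-- The normalized Radon matrix `R^{j,k}`: rows are indexed by `j`-element subsets of
`{1,…,n}`, columns by `k`-element subsets, with entry `1/√(C(k,j))` if the row set is
contained in the column set and `0` otherwise. -/
def radon (n j k : ℕ) :
    Matrix {σ : Finset (Fin n) // σ.card = j} {τ : Finset (Fin n) // τ.card = k} ℝ :=
  fun σ τ => if σ.1 ⊆ τ.1 then 1 / Real.sqrt (k.choose j) else 0

/-- The submatrix of `A` consisting of the columns indexed by `T`. -/
def colSub {m p R : Type*} (A : Matrix m p R) (T : Finset p) :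
    Matrix m {x // x ∈ T} R :=
  fun i t => A i t.1

/-- Maximum absolute row sum of a matrix, `‖M‖_∞`. -/
def matInfNorm {m p : Type*} [Fintype p] (M : Matrix m p ℝ) : ℝ :=
  ⨆ i, ∑ j, |M i j|

/-- Maximum absolute column sum of a matrix, `‖M‖₁`. -/
def matOneNorm {m p : Type*} [Fintype m] (M : Matrix m p ℝ) : ℝ :=
  ⨆ j, ∑ i, |M i j|

/-- `ℓ¹` norm of a vector. -/
def vecOneNorm {m : Type*} [Fintype m] (u : m → ℝ) : ℝ := ∑ i, |u i|

/-- `ℓ^∞` norm of a vector. -/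
def vecInfNorm {m : Type*} (u : m → ℝ) : ℝ := ⨆ i, |u i|

lemma abs_le_vecInfNorm {m : Type*} [Fintype m] (u : m → ℝ) (i : m) :
    |u i| ≤ vecInfNorm u := by
  rw [vecInfNorm]
  exact le_ciSup (Set.Finite.bddAbove (Set.finite_range fun i => |u i|)) i

lemma radon_apply (n j : ℕ) (σ : {σ : Finset (Fin n) // σ.card = j})
    (τ : {τ : Finset (Fin n) // τ.card = j + 1}) :
    radon n j (j+1) σ τ = if σ.1 ⊆ τ.1 then 1 / Real.sqrt ((j:ℝ)+1) else 0 := by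
  simp only [radon, Nat.choose_succ_self_right]
  norm_num

lemma radon_subset {n j : ℕ} {σ : {σ : Finset (Fin n) // σ.card = j}}
    {τ : {τ : Finset (Fin n) // τ.card = j + 1}} (h : radon n j (j+1) σ τ ≠ 0) :
    σ.1 ⊆ τ.1 := by
  by_contra hc
  rw [radon_apply] at h
  simp [hc] at h

lemma filt_card (n j : ℕ) (I : Finset (Fin n)) :
    (Finset.univ.filter fun σ : {σ : Finset (Fin n) // σ.card = j} => σ.1 ⊆ I).card
      = I.card.choose j := by
  rw [← Finset.card_powersetCard j I]
  apply Finset.card_bij (fun σ _ => σ.1)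
  · intro a ha
    rw [Finset.mem_powersetCard]
    exact ⟨by simpa using ha, a.2⟩
  · intro a _ b _ hab; exact Subtype.ext hab
  · intro t ht
    rw [Finset.mem_powersetCard] at ht
    exact ⟨⟨t, ht.2⟩, by simp [ht.1], rfl⟩

lemma gram_eq (n j : ℕ) (τ₁ τ₂ : {τ : Finset (Fin n) // τ.card = j + 1}) :
    ∑ σ : {σ : Finset (Fin n) // σ.card = j},
      radon n j (j+1) σ τ₁ * radon n j (j+1) σ τ₂
      = ((τ₁.1 ∩ τ₂.1).card.choose j : ℝ) / ((j:ℝ)+1) := by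
  have hc : (Real.sqrt ((j:ℝ)+1))⁻¹ * (Real.sqrt ((j:ℝ)+1))⁻¹ = ((j:ℝ)+1)⁻¹ := by
    rw [← mul_inv, Real.mul_self_sqrt (by positivity)]
  calc ∑ σ : {σ : Finset (Fin n) // σ.card = j},
      radon n j (j+1) σ τ₁ * radon n j (j+1) σ τ₂
      = ∑ σ : {σ : Finset (Fin n) // σ.card = j},
          (if σ.1 ⊆ τ₁.1 ∩ τ₂.1 then 1/((j:ℝ)+1) else 0) := by
        refine Finset.sum_congr rfl fun σ _ => ?_
        rw [radon_apply, radon_apply]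
        by_cases h1 : σ.1 ⊆ τ₁.1 <;> by_cases h2 : σ.1 ⊆ τ₂.1 <;>
          simp [h1, h2, Finset.subset_inter_iff, hc]
    _ = ((τ₁.1 ∩ τ₂.1).card.choose j : ℝ) / ((j:ℝ)+1) := by
        rw [← Finset.sum_filter, Finset.sum_const, filt_card, nsmul_eq_mul]
        ring

lemma inter_card_le (n j : ℕ) {τ₁ τ₂ : {τ : Finset (Fin n) // τ.card = j + 1}}
    (h : τ₁ ≠ τ₂) : (τ₁.1 ∩ τ₂.1).card ≤ j := by
  by_contra hlt
  push_neg at hlt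
  have hsub : τ₁.1 ∩ τ₂.1 ⊆ τ₁.1 := Finset.inter_subset_left
  have hle : (τ₁.1 ∩ τ₂.1).card ≤ j + 1 := by
    simpa [τ₁.2] using Finset.card_le_card hsub
  have h1 : τ₁.1.card = j + 1 := τ₁.2
  have he : τ₁.1 ∩ τ₂.1 = τ₁.1 :=
    Finset.eq_of_subset_of_card_le hsub (by omega)
  have : τ₁.1 ⊆ τ₂.1 := he ▸ Finset.inter_subset_right
  exact h (Subtype.ext (Finset.eq_of_subset_of_card_le this (by rw [τ₁.2, τ₂.2])))

lemma gram_diag (n j : ℕ) (τ : {τ : Finset (Fin n) // τ.card = j + 1}) :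
    ∑ σ : {σ : Finset (Fin n) // σ.card = j},
      radon n j (j+1) σ τ * radon n j (j+1) σ τ = 1 := by
  rw [gram_eq]
  rw [Finset.inter_self, τ.2, Nat.choose_succ_self_right]
  push_cast
  rw [div_self (by positivity)]

lemma gram_abs_le (n j : ℕ) {τ₁ τ₂ : {τ : Finset (Fin n) // τ.card = j + 1}}
    (h : τ₁ ≠ τ₂) :
    |∑ σ : {σ : Finset (Fin n) // σ.card = j},
      radon n j (j+1) σ τ₁ * radon n j (j+1) σ τ₂| ≤ 1 / ((j:ℝ)+1) := by
  rw [gram_eq]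
  have hch : (τ₁.1 ∩ τ₂.1).card.choose j ≤ 1 := by
    have := inter_card_le n j h
    rcases lt_or_eq_of_le this with hlt | heq
    · rw [Nat.choose_eq_zero_of_lt hlt]; omega
    · rw [heq, Nat.choose_self]
  rw [abs_div, abs_of_nonneg (by positivity : (0:ℝ) ≤ ((τ₁.1 ∩ τ₂.1).card.choose j : ℝ)),
    abs_of_nonneg (by positivity : (0:ℝ) ≤ (j:ℝ)+1)]
  gcongr
  exact_mod_cast hch

lemma gram_eq_zero (n j : ℕ) (hj : 2 ≤ j) {τ₁ τ₂ : {τ : Finset (Fin n) // τ.card = j + 1}}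
    (h : (τ₁.1 ∩ τ₂.1).card ≤ j - 2) :
    ∑ σ : {σ : Finset (Fin n) // σ.card = j},
      radon n j (j+1) σ τ₁ * radon n j (j+1) σ τ₂ = 0 := by
  rw [gram_eq, Nat.choose_eq_zero_of_lt (by omega)]
  simp

lemma colsum (n j : ℕ) (τ : {τ : Finset (Fin n) // τ.card = j + 1}) :
    ∑ σ : {σ : Finset (Fin n) // σ.card = j}, |radon n j (j+1) σ τ|
      = Real.sqrt ((j:ℝ)+1) := by
  calc ∑ σ : {σ : Finset (Fin n) // σ.card = j}, |radon n j (j+1) σ τ|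
      = ∑ σ : {σ : Finset (Fin n) // σ.card = j},
          (if σ.1 ⊆ τ.1 then 1 / Real.sqrt ((j:ℝ)+1) else 0) := by
        refine Finset.sum_congr rfl fun σ _ => ?_
        rw [radon_apply]
        by_cases h : σ.1 ⊆ τ.1 <;> simp [h, abs_of_nonneg, Real.sqrt_nonneg]
    _ = Real.sqrt ((j:ℝ)+1) := by
        rw [← Finset.sum_filter, Finset.sum_const, filt_card, nsmul_eq_mul,
          τ.2, Nat.choose_succ_self_right]
        push_cast
        rw [mul_one_div, Real.div_sqrt]

/-- the case `k = j+1`. If the support `T` of `x₀` has `|T| = s < j+1`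
and pairwise overlaps at most `j-2`, then the IRR quantity is at most `1/(j+1)` and the
stable recovery bound `‖xhat − x₀‖₁ ≤ (2s(ε+δ)/(1 − s/(j+1)))·√(j+1)` holds for every
solution of the noisy `ℓ¹` program. -/
theorem stmt17 (n j : ℕ) (hj : 2 ≤ j) (hk : j + 1 ≤ n)
    (x₀ : {τ : Finset (Fin n) // τ.card = j + 1} → ℝ)
    (T : Finset {τ : Finset (Fin n) // τ.card = j + 1})
    (hT : T = Finset.univ.filter (fun τ => x₀ τ ≠ 0))
    (s : ℕ) (hs : T.card = s) (hsj : s < j + 1)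
    (hsep : ∀ σ₁ ∈ T, ∀ σ₂ ∈ T, σ₁ ≠ σ₂ → (σ₁.1 ∩ σ₂.1).card ≤ j - 2) :
    matInfNorm ((colSub (radon n j (j + 1)) Tᶜ)ᵀ * colSub (radon n j (j + 1)) T *
      (((colSub (radon n j (j + 1)) T)ᵀ * colSub (radon n j (j + 1)) T)⁻¹)) ≤
        1 / ((j : ℝ) + 1) ∧
    ∀ (z : {σ : Finset (Fin n) // σ.card = j} → ℝ) (ε δ : ℝ)
      (b : {σ : Finset (Fin n) // σ.card = j} → ℝ),
      vecInfNorm z ≤ ε → b = (radon n j (j + 1)).mulVec x₀ + z → ε ≤ δ →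
      ∀ xhat : {τ : Finset (Fin n) // τ.card = j + 1} → ℝ,
        vecInfNorm ((radon n j (j + 1)).mulVec xhat - b) ≤ δ →
        (∀ y, vecInfNorm ((radon n j (j + 1)).mulVec y - b) ≤ δ →
          vecOneNorm xhat ≤ vecOneNorm y) →
        vecOneNorm (xhat - x₀) ≤
          2 * (s : ℝ) * (ε + δ) / (1 - (s : ℝ) / ((j : ℝ) + 1)) *
            Real.sqrt ((j : ℝ) + 1) := by
  set A := radon n j (j + 1) with hA
  -- Gram matrix on T is the identity
  have hG : (colSub A T)ᵀ * colSub A T = 1 := by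
    ext t₁ t₂
    simp only [Matrix.mul_apply, Matrix.transpose_apply, colSub, Matrix.one_apply]
    by_cases h : t₁ = t₂
    · subst h
      simp only [if_pos rfl]
      exact gram_diag n j t₁.1
    · rw [if_neg h]
      have hne : t₁.1 ≠ t₂.1 := fun he => h (Subtype.ext he)
      exact gram_eq_zero n j hj (hsep t₁.1 t₁.2 t₂.1 t₂.2 hne)
  have hinv : (((colSub A T)ᵀ * colSub A T)⁻¹ : Matrix _ _ ℝ) = 1 := by
    rw [hG]; exact Matrix.inv_eq_left_inv (by simp)
  constructor
  · -- Part 1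
    rw [hinv, Matrix.mul_one]
    apply Real.iSup_le _ (by positivity)
    intro i
    have hi : i.1 ∉ T := Finset.mem_compl.mp i.2
    have hrow : ∑ t : {x // x ∈ T}, |((colSub A Tᶜ)ᵀ * colSub A T) i t|
        = ∑ τ ∈ T, |∑ σ, A σ i.1 * A σ τ| := by
      rw [← Finset.sum_coe_sort T (fun τ => |∑ σ, A σ i.1 * A σ τ|)]
      refine Finset.sum_congr rfl fun t _ => ?_
      simp only [Matrix.mul_apply, Matrix.transpose_apply, colSub]
    rw [hrow]
    set P := T.filter (fun τ => (∑ σ, A σ i.1 * A σ τ) ≠ 0) with hP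
    have hPsub : ∀ τ ∈ P, j ≤ (i.1.1 ∩ τ.1).card := by
      intro τ hτ
      rw [hP, Finset.mem_filter] at hτ
      obtain ⟨σ, -, hσ⟩ := Finset.exists_ne_zero_of_sum_ne_zero hτ.2
      have h1 : σ.1 ⊆ i.1.1 := radon_subset (left_ne_zero_of_mul hσ)
      have h2 : σ.1 ⊆ τ.1 := radon_subset (right_ne_zero_of_mul hσ)
      have : σ.1 ⊆ i.1.1 ∩ τ.1 := Finset.subset_inter h1 h2
      have := Finset.card_le_card this
      rw [σ.2] at this
      exact this
    have hPcard : P.card ≤ 1 := by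
      rw [Finset.card_le_one]
      intro a ha b hb
      by_contra hab
      have haT : a ∈ T := Finset.mem_of_mem_filter a ha
      have hbT : b ∈ T := Finset.mem_of_mem_filter b hb
      have hab2 : (a.1 ∩ b.1).card ≤ j - 2 := hsep a haT b hbT hab
      have h1 := hPsub a ha
      have h2 := hPsub b hb
      have hu : (i.1.1 ∩ a.1) ∪ (i.1.1 ∩ b.1) ⊆ i.1.1 :=
        Finset.union_subset Finset.inter_subset_left Finset.inter_subset_left
      have hucard : ((i.1.1 ∩ a.1) ∪ (i.1.1 ∩ b.1)).card ≤ j + 1 := by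
        have := Finset.card_le_card hu
        rw [i.1.2] at this
        exact this
      have hicard : ((i.1.1 ∩ a.1) ∩ (i.1.1 ∩ b.1)).card ≤ j - 2 := by
        refine le_trans (Finset.card_le_card ?_) hab2
        intro x hx
        simp only [Finset.mem_inter] at hx ⊢
        exact ⟨hx.1.2, hx.2.2⟩
      have := Finset.card_union_add_card_inter (i.1.1 ∩ a.1) (i.1.1 ∩ b.1)
      omega
    calc ∑ τ ∈ T, |∑ σ, A σ i.1 * A σ τ|
        = ∑ τ ∈ P, |∑ σ, A σ i.1 * A σ τ| := by
          refine (Finset.sum_filter_of_ne fun τ hτ h => ?_).symm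
          exact fun h0 => h (by rw [h0]; simp)
      _ ≤ P.card • (1 / ((j:ℝ)+1)) := by
          refine Finset.sum_le_card_nsmul _ _ _ fun τ hτ => ?_
          have hτT : τ ∈ T := Finset.mem_of_mem_filter τ hτ
          have : i.1 ≠ τ := fun he => hi (he ▸ hτT)
          exact gram_abs_le n j this
      _ ≤ 1 / ((j:ℝ)+1) := by
          have hPc : (P.card : ℝ) ≤ 1 := by exact_mod_cast hPcard
          rw [nsmul_eq_mul]
          nlinarith [one_div_nonneg.mpr (show (0:ℝ) ≤ (j:ℝ)+1 by positivity)]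
  · -- Part 2
    intro z ε δ b hz hb hεδ xhat hfeas hmin
    have hε0 : 0 ≤ ε := by
      refine le_trans ?_ hz
      obtain ⟨σ0, hσ0⟩ := Finset.exists_subset_card_eq (show j ≤ (Finset.univ : Finset (Fin n)).card by simp; omega)
      have := abs_le_vecInfNorm z ⟨σ0, hσ0.2⟩
      exact le_trans (abs_nonneg _) this
    have hx0z : ∀ τ, τ ∉ T → x₀ τ = 0 := by
      intro τ hτ
      rw [hT] at hτ
      simpa using hτ
    -- feasibility of x₀
    have hAx0 : A.mulVec x₀ - b = -z := by
      rw [hb]; abel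
    have hfx : vecInfNorm (A.mulVec x₀ - b) ≤ δ := by
      rw [hAx0]
      have : vecInfNorm (-z) = vecInfNorm z := by
        simp only [vecInfNorm, Pi.neg_apply, abs_neg]
      linarith
    have hmin0 : vecOneNorm xhat ≤ vecOneNorm x₀ := hmin x₀ hfx
    -- residual bound
    have hw : ∀ σ, |A.mulVec xhat σ - A.mulVec x₀ σ| ≤ ε + δ := by
      intro σ
      have h1 : |(A.mulVec xhat - b) σ| ≤ δ := le_trans (abs_le_vecInfNorm _ σ) hfeas
      have h2 : |(A.mulVec x₀ - b) σ| ≤ ε := by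
        rw [hAx0]
        exact le_trans (by simp) (le_trans (abs_le_vecInfNorm z σ) hz)
      simp only [Pi.sub_apply] at h1 h2
      have : A.mulVec xhat σ - A.mulVec x₀ σ
          = (A.mulVec xhat σ - b σ) - (A.mulVec x₀ σ - b σ) := by ring
      rw [this]
      calc |(A.mulVec xhat σ - b σ) - (A.mulVec x₀ σ - b σ)|
          ≤ |A.mulVec xhat σ - b σ| + |A.mulVec x₀ σ - b σ| := abs_sub _ _
        _ ≤ ε + δ := by linarith
    set ST := ∑ τ ∈ T, |xhat τ - x₀ τ| with hST
    set C := ∑ τ ∈ Tᶜ, |xhat τ - x₀ τ| with hC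
    have hCnn : 0 ≤ C := Finset.sum_nonneg fun τ _ => abs_nonneg _
    have hSTnn : 0 ≤ ST := Finset.sum_nonneg fun τ _ => abs_nonneg _
    -- cone condition
    have hcone : C ≤ ST := by
      have e1 : vecOneNorm x₀ = ∑ τ ∈ T, |x₀ τ| := by
        rw [vecOneNorm, ← Finset.sum_add_sum_compl T (fun τ => |x₀ τ|)]
        have : ∑ τ ∈ Tᶜ, |x₀ τ| = 0 :=
          Finset.sum_eq_zero fun τ hτ => by
            rw [hx0z τ (by simpa using hτ)]; simp
        rw [this, add_zero]
      have e2 : vecOneNorm xhat = ∑ τ ∈ T, |xhat τ| + ∑ τ ∈ Tᶜ, |xhat τ| :=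
        (Finset.sum_add_sum_compl T _).symm
      have e3 : ∑ τ ∈ Tᶜ, |xhat τ| = C := by
        refine Finset.sum_congr rfl fun τ hτ => ?_
        rw [hx0z τ (by simpa using hτ), sub_zero]
      have e4 : ∑ τ ∈ T, |x₀ τ| - ST ≤ ∑ τ ∈ T, |xhat τ| := by
        rw [hST, ← Finset.sum_sub_distrib]
        refine Finset.sum_le_sum fun τ _ => ?_
        have : |x₀ τ| ≤ |xhat τ| + |xhat τ - x₀ τ| := by
          calc |x₀ τ| = |xhat τ - (xhat τ - x₀ τ)| := by ring_nf
            _ ≤ |xhat τ| + |xhat τ - x₀ τ| := abs_sub _ _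
        linarith
      rw [e2, e3, e1] at hmin0
      linarith
    -- per-coordinate bound on T
    have key : ∀ τ ∈ T, |xhat τ - x₀ τ|
        ≤ Real.sqrt ((j:ℝ)+1) * (ε + δ) + (1/((j:ℝ)+1)) * C := by
      intro τ hτ
      have hid : (∑ σ, A σ τ * (A.mulVec xhat σ - A.mulVec x₀ σ))
          = (xhat τ - x₀ τ)
            + ∑ τ₂ ∈ Tᶜ, (∑ σ, A σ τ * A σ τ₂) * (xhat τ₂ - x₀ τ₂) := by
        have e0 : ∀ σ, A.mulVec xhat σ - A.mulVec x₀ σ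
            = ∑ τ₂, A σ τ₂ * (xhat τ₂ - x₀ τ₂) := by
          intro σ
          simp only [Matrix.mulVec, dotProduct, mul_sub, Finset.sum_sub_distrib]
        calc (∑ σ, A σ τ * (A.mulVec xhat σ - A.mulVec x₀ σ))
            = ∑ σ, ∑ τ₂, A σ τ * (A σ τ₂ * (xhat τ₂ - x₀ τ₂)) := by
              refine Finset.sum_congr rfl fun σ _ => ?_
              rw [e0, Finset.mul_sum]
          _ = ∑ τ₂, (∑ σ, A σ τ * A σ τ₂) * (xhat τ₂ - x₀ τ₂) := by
              rw [Finset.sum_comm]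
              refine Finset.sum_congr rfl fun τ₂ _ => ?_
              rw [Finset.sum_mul]
              refine Finset.sum_congr rfl fun σ _ => by ring
          _ = ∑ τ₂ ∈ T, (∑ σ, A σ τ * A σ τ₂) * (xhat τ₂ - x₀ τ₂)
              + ∑ τ₂ ∈ Tᶜ, (∑ σ, A σ τ * A σ τ₂) * (xhat τ₂ - x₀ τ₂) :=
              (Finset.sum_add_sum_compl T _).symm
          _ = (xhat τ - x₀ τ)
              + ∑ τ₂ ∈ Tᶜ, (∑ σ, A σ τ * A σ τ₂) * (xhat τ₂ - x₀ τ₂) := by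
              congr 1
              rw [Finset.sum_eq_single_of_mem τ hτ]
              · rw [gram_diag, one_mul]
              · intro τ₂ hτ₂ hne
                rw [gram_eq_zero n j hj (hsep τ hτ τ₂ hτ₂ (Ne.symm hne)), zero_mul]
      have habs1 : |∑ σ, A σ τ * (A.mulVec xhat σ - A.mulVec x₀ σ)|
          ≤ Real.sqrt ((j:ℝ)+1) * (ε + δ) := by
        calc |∑ σ, A σ τ * (A.mulVec xhat σ - A.mulVec x₀ σ)|
            ≤ ∑ σ, |A σ τ * (A.mulVec xhat σ - A.mulVec x₀ σ)| :=
              Finset.abs_sum_le_sum_abs _ _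
          _ ≤ ∑ σ, |A σ τ| * (ε + δ) := by
              refine Finset.sum_le_sum fun σ _ => ?_
              rw [abs_mul]
              exact mul_le_mul_of_nonneg_left (hw σ) (abs_nonneg _)
          _ = Real.sqrt ((j:ℝ)+1) * (ε + δ) := by
              rw [← Finset.sum_mul, colsum]
      have habs2 : |∑ τ₂ ∈ Tᶜ, (∑ σ, A σ τ * A σ τ₂) * (xhat τ₂ - x₀ τ₂)|
          ≤ (1/((j:ℝ)+1)) * C := by
        calc |∑ τ₂ ∈ Tᶜ, (∑ σ, A σ τ * A σ τ₂) * (xhat τ₂ - x₀ τ₂)|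
            ≤ ∑ τ₂ ∈ Tᶜ, |(∑ σ, A σ τ * A σ τ₂) * (xhat τ₂ - x₀ τ₂)| :=
              Finset.abs_sum_le_sum_abs _ _
          _ ≤ ∑ τ₂ ∈ Tᶜ, (1/((j:ℝ)+1)) * |xhat τ₂ - x₀ τ₂| := by
              refine Finset.sum_le_sum fun τ₂ hτ₂ => ?_
              rw [abs_mul]
              refine mul_le_mul_of_nonneg_right ?_ (abs_nonneg _)
              have hτ₂T : τ₂ ∉ T := by simpa using hτ₂
              exact gram_abs_le n j (fun he => hτ₂T (he ▸ hτ))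
          _ = (1/((j:ℝ)+1)) * C := by rw [← Finset.mul_sum]
      have : xhat τ - x₀ τ = (∑ σ, A σ τ * (A.mulVec xhat σ - A.mulVec x₀ σ))
          - ∑ τ₂ ∈ Tᶜ, (∑ σ, A σ τ * A σ τ₂) * (xhat τ₂ - x₀ τ₂) := by
        rw [hid]; ring
      rw [this]
      calc |(∑ σ, A σ τ * (A.mulVec xhat σ - A.mulVec x₀ σ))
          - ∑ τ₂ ∈ Tᶜ, (∑ σ, A σ τ * A σ τ₂) * (xhat τ₂ - x₀ τ₂)|
          ≤ |∑ σ, A σ τ * (A.mulVec xhat σ - A.mulVec x₀ σ)|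
            + |∑ τ₂ ∈ Tᶜ, (∑ σ, A σ τ * A σ τ₂) * (xhat τ₂ - x₀ τ₂)| := abs_sub _ _
        _ ≤ Real.sqrt ((j:ℝ)+1) * (ε + δ) + (1/((j:ℝ)+1)) * C := by
            exact add_le_add habs1 habs2
    -- sum the per-coordinate bound
    have hsum : ST ≤ (s:ℝ) * (Real.sqrt ((j:ℝ)+1) * (ε + δ))
        + ((s:ℝ)/((j:ℝ)+1)) * C := by
      calc ST ≤ ∑ _τ ∈ T, (Real.sqrt ((j:ℝ)+1) * (ε + δ) + (1/((j:ℝ)+1)) * C) :=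
            Finset.sum_le_sum key
        _ = (s:ℝ) * (Real.sqrt ((j:ℝ)+1) * (ε + δ)) + ((s:ℝ)/((j:ℝ)+1)) * C := by
            rw [Finset.sum_const, hs, nsmul_eq_mul]
            ring
    have hq1 : (s:ℝ)/((j:ℝ)+1) < 1 := by
      rw [div_lt_one (by positivity)]
      exact_mod_cast hsj
    have hq0 : (0:ℝ) ≤ (s:ℝ)/((j:ℝ)+1) := by positivity
    have hpos : (0:ℝ) < 1 - (s:ℝ)/((j:ℝ)+1) := by linarith
    have hSTb : ST ≤ (s:ℝ) * (Real.sqrt ((j:ℝ)+1) * (ε + δ)) / (1 - (s:ℝ)/((j:ℝ)+1)) := by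
      rw [le_div_iff₀ hpos]
      have h2 : ((s:ℝ)/((j:ℝ)+1)) * C ≤ ((s:ℝ)/((j:ℝ)+1)) * ST :=
        mul_le_mul_of_nonneg_left hcone hq0
      nlinarith
    have hnorm : vecOneNorm (xhat - x₀) = ST + C := by
      rw [vecOneNorm, ← Finset.sum_add_sum_compl T (fun τ => |(xhat - x₀) τ|)]
      simp only [Pi.sub_apply]
      rfl
    rw [hnorm]
    have hrhs : 2 * (s:ℝ) * (ε + δ) / (1 - (s:ℝ)/((j:ℝ)+1)) * Real.sqrt ((j:ℝ)+1)
        = 2 * ((s:ℝ) * (Real.sqrt ((j:ℝ)+1) * (ε + δ)) / (1 - (s:ℝ)/((j:ℝ)+1))) := by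
      ring
    rw [hrhs]
    linarith
end
end

section
/- Let 2 ≤ j ≤ k₁ < k₂ < ⋯ < k_ℓ ≤ n and let A be the concatenated normalized Radon matrix whose rows are indexed by the j-element subsets of {1,…,n} and whose columns are indexed by all subsets σ of {1,…,n} with |σ| ∈ {k₁,…,k_ℓ}, the column for σ having entry 1/√(C(|σ|,j)) at each j-element subset contained in σ and 0 elsewhere. Let x₀ be a vector supported on a set T of such column-index subsets, and suppose the members of T are pairwise disjoint. Then x₀ is the unique solution of the problem: minimize ‖x‖₁ subject to A x = A x₀. -/
open scoped Classical
open Finset Matrix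

noncomputable section

lemma choose_strict_mono_n {j k k' : ℕ} (hj : 1 ≤ j) (hjk : j ≤ k) (hkk : k < k') :
    k.choose j < k'.choose j := by
  have h1 : k.choose j < (k+1).choose j := by
    obtain ⟨j', rfl⟩ : ∃ m, j = m + 1 := ⟨j - 1, by omega⟩
    have hrec : (k+1).choose (j'+1) = k.choose j' + k.choose (j'+1) := Nat.choose_succ_succ k j'
    have h0 : 0 < k.choose j' := Nat.choose_pos (by omega)
    omega
  exact lt_of_lt_of_le h1 (Nat.choose_le_choose j hkk)

lemma choose_sq_key {j a k : ℕ} (hj : 2 ≤ j) (hja : j ≤ a) (hak : a < k) :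
    a.choose j * k ^ 2 < k.choose j * a ^ 2 := by
  obtain ⟨j2, rfl⟩ : ∃ m, j = m + 2 := ⟨j - 2, by omega⟩
  obtain ⟨a2, rfl⟩ : ∃ m, a = m + 2 := ⟨a - 2, by omega⟩
  obtain ⟨k2, rfl⟩ : ∃ m, k = m + 2 := ⟨k - 2, by omega⟩
  have ha1 : (a2+2) * (a2+1).choose (j2+1) = (a2+2).choose (j2+2) * (j2+2) :=
    Nat.add_one_mul_choose_eq (a2+1) (j2+1)
  have ha2 : (a2+1) * a2.choose j2 = (a2+1).choose (j2+1) * (j2+1) :=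
    Nat.add_one_mul_choose_eq a2 j2
  have hk1 : (k2+2) * (k2+1).choose (j2+1) = (k2+2).choose (j2+2) * (j2+2) :=
    Nat.add_one_mul_choose_eq (k2+1) (j2+1)
  have hk2 : (k2+1) * k2.choose j2 = (k2+1).choose (j2+1) * (j2+1) :=
    Nat.add_one_mul_choose_eq k2 j2
  have hle : a2.choose j2 ≤ k2.choose j2 := Nat.choose_le_choose j2 (by omega)
  have hpos : 0 < k2.choose j2 := Nat.choose_pos (by omega)
  have hsmall : ((a2:ℤ)+1) * a2.choose j2 * (k2+2) < ((k2:ℤ)+1) * k2.choose j2 * (a2+2) := by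
    have h1 : ((a2:ℤ)+1) * a2.choose j2 * (k2+2) ≤ ((a2:ℤ)+1) * k2.choose j2 * (k2+2) := by
      have hc : (a2.choose j2 : ℤ) ≤ (k2.choose j2 : ℤ) := by exact_mod_cast hle
      have : (0:ℤ) ≤ (a2:ℤ)+1 := by positivity
      gcongr
    have h2 : ((a2:ℤ)+1) * k2.choose j2 * (k2+2) < ((k2:ℤ)+1) * k2.choose j2 * (a2+2) := by
      have hc : (0:ℤ) < (k2.choose j2 : ℤ) := by exact_mod_cast hpos
      have hq : ((a2:ℤ)+1) * (k2+2) < ((k2:ℤ)+1) * (a2+2) := by nlinarith [show (a2:ℤ) < k2 by exact_mod_cast (by omega : a2 < k2)]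
      calc ((a2:ℤ)+1) * k2.choose j2 * (k2+2) = (((a2:ℤ)+1)*(k2+2)) * k2.choose j2 := by ring
        _ < (((k2:ℤ)+1)*(a2+2)) * k2.choose j2 := by exact mul_lt_mul_of_pos_right hq hc
        _ = ((k2:ℤ)+1) * k2.choose j2 * (a2+2) := by ring
    exact lt_of_le_of_lt h1 h2
  zify at ha1 ha2 hk1 hk2 ⊢
  have e1 : ((a2+2).choose (j2+2) : ℤ) * ((k2:ℤ)+2)^2 * (((j2:ℤ)+2)*((j2:ℤ)+1))
      = (((a2:ℤ)+2)*((k2:ℤ)+2)) * (((a2:ℤ)+1)*(a2.choose j2)*((k2:ℤ)+2)) := by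
    linear_combination (-((k2:ℤ)+2)^2*((j2:ℤ)+1)) * ha1 + (-((k2:ℤ)+2)^2*((a2:ℤ)+2)) * ha2
  have e2 : ((k2+2).choose (j2+2) : ℤ) * ((a2:ℤ)+2)^2 * (((j2:ℤ)+2)*((j2:ℤ)+1))
      = (((a2:ℤ)+2)*((k2:ℤ)+2)) * (((k2:ℤ)+1)*(k2.choose j2)*((a2:ℤ)+2)) := by
    linear_combination (-((a2:ℤ)+2)^2*((j2:ℤ)+1)) * hk1 + (-((a2:ℤ)+2)^2*((k2:ℤ)+2)) * hk2
  have big : ((a2+2).choose (j2+2) : ℤ) * ((k2:ℤ)+2)^2 * (((j2:ℤ)+2)*((j2:ℤ)+1))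
      < ((k2+2).choose (j2+2) : ℤ) * ((a2:ℤ)+2)^2 * (((j2:ℤ)+2)*((j2:ℤ)+1)) := by
    rw [e1, e2]
    exact mul_lt_mul_of_pos_left hsmall (by positivity)
  have hc : (0:ℤ) < ((j2:ℤ)+2)*((j2:ℤ)+1) := by positivity
  calc ((a2+2).choose (j2+2) : ℤ) * (((k2:ℤ)+2))^2
      < ((k2+2).choose (j2+2) : ℤ) * (((a2:ℤ)+2))^2 := (mul_lt_mul_iff_of_pos_right hc).mp big
    _ = _ := by push_cast; ring

/-- per-term bound, strict version (when `j ≤ a`). -/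
lemma term_lt {j a k k' : ℕ} (hj : 2 ≤ j) (hja : j ≤ a) (hak : a ≤ k) (hak' : a ≤ k')
    (hne : ¬(a = k ∧ a = k')) :
    (a.choose j : ℝ) / (Real.sqrt (k'.choose j) * Real.sqrt (k.choose j)) < a / k := by
  have hjk : j ≤ k := le_trans hja hak
  have hjk' : j ≤ k' := le_trans hja hak'
  have hkpos : (0:ℝ) < k := by exact_mod_cast (by omega : 0 < k)
  have hCk : (0:ℝ) < (k.choose j : ℝ) := by exact_mod_cast Nat.choose_pos hjk
  have hCk' : (0:ℝ) < (k'.choose j : ℝ) := by exact_mod_cast Nat.choose_pos hjk'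
  have hsk : (0:ℝ) < Real.sqrt (k.choose j) := Real.sqrt_pos.mpr hCk
  have hsk' : (0:ℝ) < Real.sqrt (k'.choose j) := Real.sqrt_pos.mpr hCk'
  rcases lt_or_eq_of_le hak with hlt | heq
  · -- a < k
    have hnat := choose_sq_key hj hja hlt
    have hle : (a.choose j : ℝ) ≤ (k'.choose j : ℝ) := by
      exact_mod_cast Nat.choose_le_choose j hak'
    have hCa : (0:ℝ) < (a.choose j : ℝ) := by exact_mod_cast Nat.choose_pos hja
    have hsq : ((a.choose j : ℝ) / (Real.sqrt (k'.choose j) * Real.sqrt (k.choose j)))^2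
        < ((a:ℝ) / k)^2 := by
      have hden : ((Real.sqrt (k'.choose j) * Real.sqrt (k.choose j)))^2
          = (k'.choose j : ℝ) * (k.choose j : ℝ) := by
        rw [mul_pow, Real.sq_sqrt hCk'.le, Real.sq_sqrt hCk.le]
      rw [div_pow, div_pow, hden]
      rw [div_lt_div_iff₀ (by positivity) (by positivity)]
      have hnatR : (a.choose j : ℝ) * (k:ℝ)^2 < (k.choose j : ℝ) * (a:ℝ)^2 := by
        exact_mod_cast hnat
      calc (a.choose j : ℝ)^2 * (k:ℝ)^2 = (a.choose j : ℝ) * ((a.choose j : ℝ) * (k:ℝ)^2) := by ring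
        _ ≤ (k'.choose j : ℝ) * ((a.choose j : ℝ) * (k:ℝ)^2) := mul_le_mul_of_nonneg_right hle (by positivity)
        _ < (k'.choose j : ℝ) * ((k.choose j : ℝ) * (a:ℝ)^2) := by
            exact mul_lt_mul_of_pos_left hnatR hCk'
        _ = (a:ℝ)^2 * ((k'.choose j : ℝ) * (k.choose j : ℝ)) := by ring
    exact lt_of_pow_lt_pow_left₀ 2 (by positivity) hsq
  · -- a = k, so k < k'
    subst heq
    have hkk' : a < k' := lt_of_le_of_ne hak' (fun h => hne ⟨rfl, h⟩)
    have hmono : (a.choose j : ℝ) < (k'.choose j : ℝ) := by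
      exact_mod_cast choose_strict_mono_n (by omega) hja hkk'
    have hCa : (0:ℝ) < (a.choose j : ℝ) := by exact_mod_cast Nat.choose_pos hja
    have h1 : (a.choose j : ℝ) / (Real.sqrt (k'.choose j) * Real.sqrt (a.choose j)) < 1 := by
      rw [div_lt_one (by positivity)]
      calc (a.choose j : ℝ) = Real.sqrt (a.choose j) * Real.sqrt (a.choose j) :=
            (Real.mul_self_sqrt hCa.le).symm
        _ < Real.sqrt (k'.choose j) * Real.sqrt (a.choose j) := by
            exact mul_lt_mul_of_pos_right (Real.sqrt_lt_sqrt hCa.le hmono) (Real.sqrt_pos.mpr hCa)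
    calc (a.choose j : ℝ) / (Real.sqrt (k'.choose j) * Real.sqrt (a.choose j)) < 1 := h1
      _ = (a:ℝ)/(a:ℝ) := by rw [div_self (ne_of_gt hkpos)]

lemma card_subsets {n : ℕ} (j : ℕ) (s : Finset (Fin n)) :
    (Finset.univ.filter (fun ρ : {ρ : Finset (Fin n) // ρ.card = j} => ρ.1 ⊆ s)).card
      = s.card.choose j := by
  rw [← Finset.card_powersetCard j s]
  apply Finset.card_bij (fun ρ _ => ρ.1)
  · intro ρ hρ
    rw [Finset.mem_powersetCard]
    exact ⟨(Finset.mem_filter.mp hρ).2, ρ.2⟩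
  · intro ρ₁ h₁ ρ₂ h₂ h
    exact Subtype.ext h
  · intro t ht
    rw [Finset.mem_powersetCard] at ht
    exact ⟨⟨t, ht.2⟩, Finset.mem_filter.mpr ⟨Finset.mem_univ _, ht.1⟩, rfl⟩

set_option maxHeartbeats 1000000 in
/-- mixed clique sizes: columns are indexed by all subsets of `{1,…,n}`
whose cardinality lies in a given set `ks` of sizes in `[j, n]`; the column for `σ` has
entry `1/√(C(|σ|,j))` at each `j`-subset of `σ`. If the support of `x₀` consists of
pairwise disjoint sets, then `x₀` is the unique `ℓ¹` minimizer subject to `Ax = Ax₀`. -/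
theorem stmt18 (n j : ℕ) (hj : 2 ≤ j) (ks : Finset ℕ)
    (hks : ∀ k ∈ ks, j ≤ k ∧ k ≤ n)
    (x₀ : {σ : Finset (Fin n) // σ.card ∈ ks} → ℝ)
    (hdisj : ∀ σ₁ σ₂ : {σ : Finset (Fin n) // σ.card ∈ ks},
      x₀ σ₁ ≠ 0 → x₀ σ₂ ≠ 0 → σ₁ ≠ σ₂ → Disjoint σ₁.1 σ₂.1) :
    let A : Matrix {ρ : Finset (Fin n) // ρ.card = j}
        {σ : Finset (Fin n) // σ.card ∈ ks} ℝ :=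
      fun ρ σ => if ρ.1 ⊆ σ.1 then 1 / Real.sqrt ((σ.1.card).choose j) else 0
    ∀ y, A.mulVec y = A.mulVec x₀ → y ≠ x₀ → vecOneNorm x₀ < vecOneNorm y := by
  intro A y hAy hyne
  have hA : ∀ ρ σ, A ρ σ = if ρ.1 ⊆ σ.1 then 1 / Real.sqrt ((σ.1.card).choose j) else 0 :=
    fun ρ σ => rfl
  set h : {σ : Finset (Fin n) // σ.card ∈ ks} → ℝ := y - x₀ with hh
  have hyx : ∀ σ, y σ = x₀ σ + h σ := by intro σ; simp [hh]
  have hh0 : A.mulVec h = 0 := by rw [hh, Matrix.mulVec_sub, hAy, sub_self]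
  set T : Finset {σ : Finset (Fin n) // σ.card ∈ ks} :=
    Finset.univ.filter (fun σ => x₀ σ ≠ 0) with hT
  have hx0 : ∀ σ ∈ Finset.univ \ T, x₀ σ = 0 := by
    intro σ hσ
    rw [Finset.mem_sdiff, hT, Finset.mem_filter] at hσ
    by_contra hc
    exact hσ.2 ⟨Finset.mem_univ _, hc⟩
  have hcard : ∀ σ : {σ : Finset (Fin n) // σ.card ∈ ks}, j ≤ σ.1.card :=
    fun σ => (hks _ σ.2).1
  have hCpos : ∀ σ : {σ : Finset (Fin n) // σ.card ∈ ks},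
      (0:ℝ) < ((σ.1.card).choose j : ℝ) := fun σ => by
    exact_mod_cast Nat.choose_pos (hcard σ)
  have hSpos : ∀ σ : {σ : Finset (Fin n) // σ.card ∈ ks},
      (0:ℝ) < Real.sqrt ((σ.1.card).choose j) := fun σ => Real.sqrt_pos.mpr (hCpos σ)
  set coef : {σ : Finset (Fin n) // σ.card ∈ ks} → {σ : Finset (Fin n) // σ.card ∈ ks} → ℝ :=
    fun σ₀ σ => (((σ₀.1 ∩ σ.1).card.choose j : ℕ) : ℝ) / Real.sqrt ((σ.1.card).choose j)
    with hcoef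
  have hcoef_nonneg : ∀ σ₀ σ, 0 ≤ coef σ₀ σ := fun σ₀ σ =>
    div_nonneg (by positivity) (Real.sqrt_nonneg _)
  -- KEY IDENTITY
  have key : ∀ σ₀ : {σ : Finset (Fin n) // σ.card ∈ ks},
      ∑ σ, coef σ₀ σ * h σ = 0 := by
    intro σ₀
    have h1 : ∑ ρ ∈ Finset.univ.filter
        (fun ρ : {ρ : Finset (Fin n) // ρ.card = j} => ρ.1 ⊆ σ₀.1), A.mulVec h ρ = 0 := by
      rw [hh0]; simp
    rw [Finset.sum_congr rfl (fun ρ _ => by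
      show A.mulVec h ρ = ∑ σ, A ρ σ * h σ
      rfl)] at h1
    rw [Finset.sum_comm] at h1
    rw [← h1]
    apply Finset.sum_congr rfl
    intro σ _
    have heq : ∑ ρ ∈ Finset.univ.filter
        (fun ρ : {ρ : Finset (Fin n) // ρ.card = j} => ρ.1 ⊆ σ₀.1), A ρ σ * h σ
        = (((σ₀.1 ∩ σ.1).card.choose j : ℕ) : ℝ)
          * (1 / Real.sqrt ((σ.1.card).choose j)) * h σ := by
      rw [Finset.sum_congr rfl (fun ρ _ => by
        rw [hA, ite_mul, zero_mul])]
      rw [← Finset.sum_filter, Finset.sum_const]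
      rw [Finset.filter_filter]
      have hfc : (Finset.univ.filter
          (fun ρ : {ρ : Finset (Fin n) // ρ.card = j} => ρ.1 ⊆ σ₀.1 ∧ ρ.1 ⊆ σ.1)).card
          = (σ₀.1 ∩ σ.1).card.choose j := by
        rw [← card_subsets j (σ₀.1 ∩ σ.1)]
        congr 1
        apply Finset.filter_congr
        intro ρ _
        simp [Finset.subset_inter_iff]
      rw [hfc, nsmul_eq_mul, mul_assoc]
    rw [heq]
    simp only [hcoef]
    ring
  -- diag coefficient
  have hdiag : ∀ σ₀, coef σ₀ σ₀ = Real.sqrt ((σ₀.1.card).choose j) := by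
    intro σ₀
    simp only [hcoef, Finset.inter_self]
    exact Real.div_sqrt
  -- isolate
  have isol : ∀ σ₀, Real.sqrt ((σ₀.1.card).choose j) * h σ₀
      = -∑ σ ∈ Finset.univ.erase σ₀, coef σ₀ σ * h σ := by
    intro σ₀
    have hk := key σ₀
    rw [← Finset.add_sum_erase _ _ (Finset.mem_univ σ₀)] at hk
    rw [hdiag σ₀] at hk
    linarith
  -- restrict to Tᶜ for σ₀ ∈ T
  have isolT : ∀ σ₀ ∈ T, Real.sqrt ((σ₀.1.card).choose j) * h σ₀
      = -∑ σ ∈ Finset.univ \ T, coef σ₀ σ * h σ := by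
    intro σ₀ hσ₀
    rw [isol σ₀]
    congr 1
    refine (Finset.sum_subset ?_ ?_).symm
    · intro σ hσ
      rw [Finset.mem_sdiff] at hσ
      refine Finset.mem_erase.mpr ⟨?_, Finset.mem_univ _⟩
      rintro rfl
      exact hσ.2 hσ₀
    · intro σ hσ hσ'
      rw [Finset.mem_erase] at hσ
      have hσT : σ ∈ T := by
        by_contra hc
        exact hσ' (Finset.mem_sdiff.mpr ⟨Finset.mem_univ _, hc⟩)
      have hd : Disjoint σ₀.1 σ.1 :=
        hdisj _ _ (Finset.mem_filter.mp hσ₀).2 (Finset.mem_filter.mp hσT).2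
          (fun e => hσ.1 e.symm)
      have hcz : (σ₀.1 ∩ σ.1).card = 0 := by
        rw [Finset.card_eq_zero]
        exact Finset.disjoint_iff_inter_eq_empty.mp hd
      simp only [hcoef, hcz, Nat.choose_eq_zero_of_lt (show 0 < j by omega)]
      simp
  -- weights
  set w : {σ : Finset (Fin n) // σ.card ∈ ks} → {σ : Finset (Fin n) // σ.card ∈ ks} → ℝ :=
    fun σ₀ σ => coef σ₀ σ / Real.sqrt ((σ₀.1.card).choose j) with hw
  have hw_nonneg : ∀ σ₀ σ, 0 ≤ w σ₀ σ := fun σ₀ σ =>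
    div_nonneg (hcoef_nonneg _ _) (Real.sqrt_nonneg _)
  -- per-row estimate
  have est : ∀ σ₀ ∈ T, |h σ₀| ≤ ∑ σ ∈ Finset.univ \ T, w σ₀ σ * |h σ| := by
    intro σ₀ hσ₀
    have h1 : Real.sqrt ((σ₀.1.card).choose j) * |h σ₀|
        ≤ ∑ σ ∈ Finset.univ \ T, coef σ₀ σ * |h σ| := by
      calc Real.sqrt ((σ₀.1.card).choose j) * |h σ₀|
          = |Real.sqrt ((σ₀.1.card).choose j) * h σ₀| := by
            rw [abs_mul, abs_of_pos (hSpos σ₀)]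
        _ = |∑ σ ∈ Finset.univ \ T, coef σ₀ σ * h σ| := by rw [isolT σ₀ hσ₀, abs_neg]
        _ ≤ ∑ σ ∈ Finset.univ \ T, |coef σ₀ σ * h σ| := Finset.abs_sum_le_sum_abs _ _
        _ = ∑ σ ∈ Finset.univ \ T, coef σ₀ σ * |h σ| := Finset.sum_congr rfl (fun σ _ => by
            rw [abs_mul, abs_of_nonneg (hcoef_nonneg _ _)])
    have h2 : |h σ₀| ≤ (∑ σ ∈ Finset.univ \ T, coef σ₀ σ * |h σ|)
        / Real.sqrt ((σ₀.1.card).choose j) := by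
      rw [le_div_iff₀ (hSpos σ₀), mul_comm]
      exact h1
    calc |h σ₀| ≤ (∑ σ ∈ Finset.univ \ T, coef σ₀ σ * |h σ|)
          / Real.sqrt ((σ₀.1.card).choose j) := h2
      _ = ∑ σ ∈ Finset.univ \ T, w σ₀ σ * |h σ| := by
        rw [Finset.sum_div]
        exact Finset.sum_congr rfl (fun σ _ => by simp only [hw]; ring)
  -- sum over T, swap
  have sumT : ∑ σ₀ ∈ T, |h σ₀|
      ≤ ∑ σ ∈ Finset.univ \ T, (∑ σ₀ ∈ T, w σ₀ σ) * |h σ| := by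
    calc ∑ σ₀ ∈ T, |h σ₀| ≤ ∑ σ₀ ∈ T, ∑ σ ∈ Finset.univ \ T, w σ₀ σ * |h σ| :=
          Finset.sum_le_sum est
      _ = ∑ σ ∈ Finset.univ \ T, ∑ σ₀ ∈ T, w σ₀ σ * |h σ| := Finset.sum_comm
      _ = ∑ σ ∈ Finset.univ \ T, (∑ σ₀ ∈ T, w σ₀ σ) * |h σ| :=
          Finset.sum_congr rfl (fun σ _ => by rw [Finset.sum_mul])
  -- the column-sum bound
  have cbound : ∀ σ ∈ Finset.univ \ T, ∑ σ₀ ∈ T, w σ₀ σ < 1 := by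
    intro σ hσ
    have hkpos : (0:ℝ) < (σ.1.card : ℝ) := by
      have := hcard σ; exact_mod_cast (by omega : 0 < σ.1.card)
    -- the intersections are pairwise disjoint
    have hksum : ∑ σ₀ ∈ T, (σ₀.1 ∩ σ.1).card ≤ σ.1.card := by
      have hpd : ∀ σ₁ ∈ T, ∀ σ₂ ∈ T, σ₁ ≠ σ₂ →
          Disjoint (σ₁.1 ∩ σ.1) (σ₂.1 ∩ σ.1) := by
        intro σ₁ h₁ σ₂ h₂ hne
        exact Disjoint.mono Finset.inter_subset_left Finset.inter_subset_left
          (hdisj _ _ (Finset.mem_filter.mp h₁).2 (Finset.mem_filter.mp h₂).2 hne)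
      rw [← Finset.card_biUnion hpd]
      apply Finset.card_le_card
      exact Finset.biUnion_subset.mpr (fun σ₀ _ => Finset.inter_subset_right)
    -- per-term comparison
    have hterm : ∀ σ₀ ∈ T, w σ₀ σ ≤ ((σ₀.1 ∩ σ.1).card : ℝ) / (σ.1.card : ℝ) := by
      intro σ₀ hσ₀
      by_cases hja : j ≤ (σ₀.1 ∩ σ.1).card
      · have hak : (σ₀.1 ∩ σ.1).card ≤ σ.1.card :=
          Finset.card_le_card Finset.inter_subset_right
        have hak' : (σ₀.1 ∩ σ.1).card ≤ σ₀.1.card :=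
          Finset.card_le_card Finset.inter_subset_left
        have hne2 : ¬((σ₀.1 ∩ σ.1).card = σ.1.card ∧ (σ₀.1 ∩ σ.1).card = σ₀.1.card) := by
          rintro ⟨e1, e2⟩
          have q1 : σ₀.1 ∩ σ.1 = σ.1 :=
            Finset.eq_of_subset_of_card_le Finset.inter_subset_right (le_of_eq e1.symm)
          have q2 : σ₀.1 ∩ σ.1 = σ₀.1 :=
            Finset.eq_of_subset_of_card_le Finset.inter_subset_left (le_of_eq e2.symm)
          have : σ = σ₀ := Subtype.ext (q1.symm.trans q2)
          rw [Finset.mem_sdiff] at hσ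
          exact hσ.2 (this ▸ hσ₀)
        have := term_lt hj hja hak hak' hne2
        have hwe : w σ₀ σ = ((σ₀.1 ∩ σ.1).card.choose j : ℝ)
            / (Real.sqrt ((σ₀.1.card).choose j) * Real.sqrt ((σ.1.card).choose j)) := by
          simp only [hw, hcoef]
          rw [div_div, mul_comm]
        rw [hwe]
        exact le_of_lt this
      · push_neg at hja
        have : w σ₀ σ = 0 := by
          simp only [hw, hcoef, Nat.choose_eq_zero_of_lt hja]
          simp
        rw [this]
        exact div_nonneg (Nat.cast_nonneg _) (Nat.cast_nonneg _)
    by_cases hex : ∃ σ₀ ∈ T, j ≤ (σ₀.1 ∩ σ.1).card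
    · obtain ⟨τ, hτT, hτ⟩ := hex
      have hstrict : w τ σ < ((τ.1 ∩ σ.1).card : ℝ) / (σ.1.card : ℝ) := by
        have hak : (τ.1 ∩ σ.1).card ≤ σ.1.card :=
          Finset.card_le_card Finset.inter_subset_right
        have hak' : (τ.1 ∩ σ.1).card ≤ τ.1.card :=
          Finset.card_le_card Finset.inter_subset_left
        have hne2 : ¬((τ.1 ∩ σ.1).card = σ.1.card ∧ (τ.1 ∩ σ.1).card = τ.1.card) := by
          rintro ⟨e1, e2⟩
          have q1 : τ.1 ∩ σ.1 = σ.1 :=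
            Finset.eq_of_subset_of_card_le Finset.inter_subset_right (le_of_eq e1.symm)
          have q2 : τ.1 ∩ σ.1 = τ.1 :=
            Finset.eq_of_subset_of_card_le Finset.inter_subset_left (le_of_eq e2.symm)
          have : σ = τ := Subtype.ext (q1.symm.trans q2)
          rw [Finset.mem_sdiff] at hσ
          exact hσ.2 (this ▸ hτT)
        have hwe : w τ σ = ((τ.1 ∩ σ.1).card.choose j : ℝ)
            / (Real.sqrt ((τ.1.card).choose j) * Real.sqrt ((σ.1.card).choose j)) := by
          simp only [hw, hcoef]
          rw [div_div, mul_comm]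
        rw [hwe]
        exact term_lt hj hτ hak hak' hne2
      calc ∑ σ₀ ∈ T, w σ₀ σ
          < ∑ σ₀ ∈ T, ((σ₀.1 ∩ σ.1).card : ℝ) / (σ.1.card : ℝ) :=
            Finset.sum_lt_sum hterm ⟨τ, hτT, hstrict⟩
        _ = ((∑ σ₀ ∈ T, ((σ₀.1 ∩ σ.1).card : ℕ)) : ℝ) / (σ.1.card : ℝ) := by
            rw [← Finset.sum_div]
        _ ≤ 1 := by
            rw [div_le_one hkpos]
            exact_mod_cast hksum
    · push_neg at hex
      have : ∑ σ₀ ∈ T, w σ₀ σ = 0 := by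
        apply Finset.sum_eq_zero
        intro σ₀ hσ₀
        simp only [hw, hcoef, Nat.choose_eq_zero_of_lt (hex σ₀ hσ₀)]
        simp
      rw [this]
      norm_num
  -- there is a nonzero coordinate off T
  have hex0 : ∃ σ ∈ Finset.univ \ T, h σ ≠ 0 := by
    by_contra hc
    push_neg at hc
    have hall : ∀ σ, h σ = 0 := by
      intro σ
      by_cases hσT : σ ∈ T
      · have he := isolT σ hσT
        rw [Finset.sum_eq_zero (fun τ hτ => by rw [hc τ hτ, mul_zero])] at he
        have := hSpos σ
        rw [neg_zero] at he
        exact (mul_eq_zero.mp he).resolve_left (ne_of_gt this)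
      · exact hc σ (Finset.mem_sdiff.mpr ⟨Finset.mem_univ _, hσT⟩)
    apply hyne
    funext σ
    rw [hyx σ, hall σ, add_zero]
  -- strict inequality between the two halves
  have hTlt : ∑ σ₀ ∈ T, |h σ₀| < ∑ σ ∈ Finset.univ \ T, |h σ| := by
    obtain ⟨τ, hτ, hτ0⟩ := hex0
    calc ∑ σ₀ ∈ T, |h σ₀| ≤ ∑ σ ∈ Finset.univ \ T, (∑ σ₀ ∈ T, w σ₀ σ) * |h σ| := sumT
      _ < ∑ σ ∈ Finset.univ \ T, |h σ| := by
        apply Finset.sum_lt_sum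
        · intro σ hσ
          exact mul_le_of_le_one_left (abs_nonneg _) (le_of_lt (cbound σ hσ))
        · refine ⟨τ, hτ, ?_⟩
          have h1 := cbound τ hτ
          have h2 : 0 < |h τ| := abs_pos.mpr hτ0
          nlinarith
  -- final chain
  have hsplit : ∀ u : {σ : Finset (Fin n) // σ.card ∈ ks} → ℝ,
      vecOneNorm u = ∑ σ ∈ Finset.univ \ T, |u σ| + ∑ σ ∈ T, |u σ| := by
    intro u
    rw [vecOneNorm, ← Finset.sum_sdiff (Finset.subset_univ T)]
  have hx₀norm : vecOneNorm x₀ = ∑ σ ∈ T, |x₀ σ| := by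
    rw [hsplit x₀, Finset.sum_eq_zero (fun σ hσ => by rw [hx0 σ hσ, abs_zero]), zero_add]
  have hynorm : vecOneNorm y = ∑ σ ∈ Finset.univ \ T, |h σ| + ∑ σ ∈ T, |x₀ σ + h σ| := by
    rw [hsplit y]
    congr 1
    · exact Finset.sum_congr rfl (fun σ hσ => by rw [hyx σ, hx0 σ hσ, zero_add])
    · exact Finset.sum_congr rfl (fun σ _ => by rw [hyx σ])
  have htri : ∑ σ ∈ T, |x₀ σ| - ∑ σ ∈ T, |h σ| ≤ ∑ σ ∈ T, |x₀ σ + h σ| := by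
    rw [← Finset.sum_sub_distrib]
    apply Finset.sum_le_sum
    intro σ _
    have := abs_add_le (x₀ σ + h σ) (-(h σ))
    simp only [add_neg_cancel_right, abs_neg] at this
    linarith
  rw [hx₀norm, hynorm]
  linarith
end
end

section
/- For all integers j ≥ 2 and n₁, n₂ ≥ j, one has √(C(n₁, j)) + √(C(n₂, j)) < √(C(n₁ + n₂, j)). -/
open scoped Classical
open Finset Matrix

noncomputable section

lemma choose_lt_mul (n j : ℕ) (hj : 2 ≤ j) (hn : j ≤ n) :
    n.choose j < n * n.choose (j-1) := by
  have hpos : 0 < n.choose j := Nat.choose_pos hn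
  have h1 : n.choose j * j = n.choose (j-1) * (n - (j-1)) := by
    have h := Nat.choose_succ_right_eq n (j-1)
    rwa [Nat.sub_add_cancel (by omega : 1 ≤ j)] at h
  calc n.choose j < n.choose j * 2 := by omega
    _ ≤ n.choose j * j := Nat.mul_le_mul_left _ hj
    _ = n.choose (j-1) * (n - (j-1)) := h1
    _ ≤ n.choose (j-1) * n := Nat.mul_le_mul_left _ (Nat.sub_le _ _)
    _ = n * n.choose (j-1) := Nat.mul_comm _ _

lemma vand3 (n₁ n₂ : ℕ) :
    n₁.choose 2 + n₂.choose 2 + n₁ * n₂ ≤ (n₁+n₂).choose 2 := by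
  rw [Nat.add_choose_eq]
  have hsub : ({(2,0), (0,2), (1,1)} : Finset (ℕ×ℕ)) ⊆ Finset.HasAntidiagonal.antidiagonal 2 := by
    intro p hp
    simp only [Finset.mem_insert, Finset.mem_singleton] at hp
    rcases hp with h|h|h <;> subst h <;> simp
  refine le_trans ?_ (Finset.sum_le_sum_of_subset hsub)
  simp [Finset.sum_insert, Finset.sum_singleton]
  ring_nf
  omega

lemma vand4 (n₁ n₂ j : ℕ) (hj : 3 ≤ j) :
    n₁.choose j + n₂.choose j + n₁ * n₂.choose (j-1) + n₁.choose (j-1) * n₂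
      ≤ (n₁+n₂).choose j := by
  rw [Nat.add_choose_eq]
  have hsub : ({(j,0), (0,j), (1,j-1), (j-1,1)} : Finset (ℕ×ℕ)) ⊆ Finset.HasAntidiagonal.antidiagonal j := by
    intro p hp
    simp only [Finset.mem_insert, Finset.mem_singleton] at hp
    rcases hp with h|h|h|h <;> subst h <;> simp [Finset.HasAntidiagonal.mem_antidiagonal] <;> omega
  refine le_trans ?_ (Finset.sum_le_sum_of_subset hsub)
  rw [Finset.sum_insert (by simp; omega), Finset.sum_insert (by simp; omega),
      Finset.sum_insert (by simp; omega), Finset.sum_singleton]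
  simp
  ring_nf
  omega


/-- for `j ≥ 2` and `n₁, n₂ ≥ j`,
`√C(n₁,j) + √C(n₂,j) < √C(n₁+n₂,j)`. -/
theorem stmt19 (j n₁ n₂ : ℕ) (hj : 2 ≤ j) (h1 : j ≤ n₁) (h2 : j ≤ n₂) :
    Real.sqrt (n₁.choose j) + Real.sqrt (n₂.choose j) <
      Real.sqrt ((n₁ + n₂).choose j) := by
  set a : ℝ := (n₁.choose j : ℝ) with ha_def
  set b : ℝ := (n₂.choose j : ℝ) with hb_def
  have ha : (0:ℝ) ≤ a := Nat.cast_nonneg _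
  have hb : (0:ℝ) ≤ b := Nat.cast_nonneg _
  rw [Real.lt_sqrt (by positivity)]
  have expand : (Real.sqrt a + Real.sqrt b)^2 = a + b + 2 * Real.sqrt (a*b) := by
    rw [add_sq, Real.sq_sqrt ha, Real.sq_sqrt hb, Real.sqrt_mul ha]
    ring
  rw [expand]
  rcases eq_or_lt_of_le hj with hj2 | hj3
  · -- j = 2
    subst hj2
    have hnat : 4 * (n₁.choose 2 * n₂.choose 2) < (n₁ * n₂)^2 := by
      have e1 : n₁.choose 2 * 2 = n₁ * (n₁ - 1) := by
        simpa using Nat.choose_succ_right_eq n₁ 1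
      have e2 : n₂.choose 2 * 2 = n₂ * (n₂ - 1) := by
        simpa using Nat.choose_succ_right_eq n₂ 1
      have m1 : n₁ * (n₁-1) < n₁ * n₁ :=
        mul_lt_mul_of_pos_left (by omega) (by omega : 0 < n₁)
      have m2 : n₂ * (n₂-1) < n₂ * n₂ :=
        mul_lt_mul_of_pos_left (by omega) (by omega : 0 < n₂)
      calc 4 * (n₁.choose 2 * n₂.choose 2) = (n₁.choose 2 * 2) * (n₂.choose 2 * 2) := by ring
        _ = (n₁ * (n₁-1)) * (n₂ * (n₂-1)) := by rw [e1, e2]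
        _ < (n₁ * n₁) * (n₂ * n₂) := Nat.mul_lt_mul'' m1 m2
        _ = (n₁ * n₂)^2 := by ring
    have h42 : Real.sqrt 4 = 2 := by
      rw [show (4:ℝ) = 2^2 by norm_num]
      exact Real.sqrt_sq (by norm_num)
    have hkey : Real.sqrt (4*(a*b)) = 2 * Real.sqrt (a*b) := by
      rw [Real.sqrt_mul (by norm_num), h42]
    have hlt : 4*(a*b) < ((n₁*n₂:ℕ):ℝ)^2 := by
      rw [ha_def, hb_def]
      exact_mod_cast hnat
    have hsq : 2 * Real.sqrt (a*b) < ((n₁ * n₂ : ℕ):ℝ) := by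
      rw [← hkey]
      calc Real.sqrt (4*(a*b)) < Real.sqrt (((n₁*n₂:ℕ):ℝ)^2) :=
            Real.sqrt_lt_sqrt (by positivity) hlt
        _ = ((n₁*n₂:ℕ):ℝ) := Real.sqrt_sq (Nat.cast_nonneg _)
    have hv := vand3 n₁ n₂
    have hv' : a + b + ((n₁*n₂ : ℕ):ℝ) ≤ ((n₁+n₂).choose 2 : ℝ) := by
      rw [ha_def, hb_def]
      exact_mod_cast hv
    linarith
  · -- j ≥ 3
    set x : ℝ := ((n₁ * n₂.choose (j-1) : ℕ) : ℝ) with hx_def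
    set y : ℝ := (((n₁.choose (j-1)) * n₂ : ℕ) : ℝ) with hy_def
    have hx : (0:ℝ) ≤ x := Nat.cast_nonneg _
    have hy : (0:ℝ) ≤ y := Nat.cast_nonneg _
    have hab : a * b < x * y := by
      have c1 := choose_lt_mul n₁ j hj h1
      have c2 := choose_lt_mul n₂ j hj h2
      have hn' : n₁.choose j * n₂.choose j <
          (n₁ * n₂.choose (j-1)) * ((n₁.choose (j-1)) * n₂) := by
        calc n₁.choose j * n₂.choose j < (n₁ * n₁.choose (j-1)) * (n₂ * n₂.choose (j-1)) :=
              Nat.mul_lt_mul'' c1 c2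
          _ = (n₁ * n₂.choose (j-1)) * ((n₁.choose (j-1)) * n₂) := by ring
      rw [ha_def, hb_def, hx_def, hy_def]
      exact_mod_cast hn'
    have hs1 : Real.sqrt (a*b) < Real.sqrt (x*y) :=
      Real.sqrt_lt_sqrt (by positivity) hab
    have hs2 : Real.sqrt (x*y) ≤ (x+y)/2 := by
      calc Real.sqrt (x*y) ≤ Real.sqrt (((x+y)/2)^2) := by
            apply Real.sqrt_le_sqrt; nlinarith [sq_nonneg (x-y)]
        _ = (x+y)/2 := Real.sqrt_sq (by positivity)
    have hv := vand4 n₁ n₂ j hj3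
    have hv' : a + b + x + y ≤ ((n₁+n₂).choose j : ℝ) := by
      rw [ha_def, hb_def, hx_def, hy_def]
      exact_mod_cast hv
    linarith
end
end
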